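/- Let s be the root in (1, √2] of the polynomial x^5 - 2x^4 + 2x^3 - 2x^2 + 2x - 2. Then for every integer n ≥ 2, s^n is not a Garsia number. -/

import Mathlib

open Polynomial

/-- A Garsia number: an algebraic integer in `(1,2]` with all conjugates strictly outside
the unit circle and Mahler measure `2`. -/
def IsGarsia (x : ℝ) : Prop :=
  1 < x ∧ x ≤ 2 ∧ IsIntegral ℤ x ∧
  (∀ z ∈ ((minpoly ℤ x).map (Int.castRingHom ℂ)).roots, 1 < ‖z‖) ∧
  (((minpoly ℤ x).map (Int.castRingHom ℂ)).roots.map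
    (fun z => max ‖z‖ 1)).prod = 2

open Polynomial IntermediateField Module

noncomputable def Tpoly : ℤ[X] := X^5 - 2*X^4 + 2*X^3 - 2*X^2 + 2*X - 2

lemma Tpoly_degree : Tpoly.degree = 5 := by
  unfold Tpoly; compute_degree!

lemma Tpoly_natDegree : Tpoly.natDegree = 5 := by
  unfold Tpoly; compute_degree!

lemma Tpoly_monic : Tpoly.Monic := by
  unfold Tpoly; monicity!

lemma Tpoly_coeff0 : Tpoly.coeff 0 = -2 := by
  unfold Tpoly; simp [coeff_sub, coeff_add, coeff_X_pow]

lemma Tpoly_irred : Irreducible Tpoly := by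
  apply irreducible_of_eisenstein_criterion (P := Ideal.span {(2:ℤ)})
  · rw [Ideal.span_singleton_prime (by norm_num)]; exact Int.prime_two
  · rw [Tpoly_monic.leadingCoeff, Ideal.mem_span_singleton]; norm_num
  · intro n hn
    rw [Tpoly_degree] at hn
    have hn5 : n < 5 := by exact_mod_cast hn
    rw [Ideal.mem_span_singleton]
    interval_cases n <;> simp [Tpoly, coeff_X_pow, coeff_X]
  · rw [Tpoly_degree]; norm_num
  · rw [Ideal.span_singleton_pow, Ideal.mem_span_singleton, Tpoly_coeff0]
    norm_num
  · exact Tpoly_monic.isPrimitive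

lemma abs_norm_eq {F L : Type*} [Field F] [LinearOrder F] [IsStrictOrderedRing F]
    [Field L] [Algebra F L] [FiniteDimensional F L] [Algebra.IsSeparable F L] (x : L) :
    |Algebra.norm F x| = |(minpoly F x).coeff 0| ^ (finrank F⟮x⟯ L) := by
  rw [Algebra.norm_eq_norm_adjoin F x, abs_pow]
  congr 1
  rw [← IntermediateField.adjoin.powerBasis_gen (IsIntegral.of_finite F x),
      Algebra.PowerBasis.norm_gen_eq_coeff_zero_minpoly,
      adjoin.powerBasis_gen, minpoly_gen]
  simp [abs_mul]

lemma main_aux {L : Type*} [Field L] [Algebra ℚ L] [FiniteDimensional ℚ L]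
    (x : L) (n : ℕ) (h5 : finrank ℚ L = 5) (hx5 : (minpoly ℚ x).natDegree = 5)
    (hcx : |(minpoly ℚ x).coeff 0| = 2) (hcxn : |(minpoly ℚ (x ^ n)).coeff 0| = 2)
    (hn : 2 ≤ n) : n = 5 ∧ (minpoly ℚ (x ^ n)).natDegree = 1 := by
  have e1 := abs_norm_eq (F := ℚ) x
  have hfrx : finrank ℚ ℚ⟮x⟯ = 5 := by
    rw [IntermediateField.adjoin.finrank (IsIntegral.of_finite ℚ x), hx5]
  have htow1 := Module.finrank_mul_finrank ℚ ℚ⟮x⟯ L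
  rw [h5, hfrx] at htow1
  have h1' : finrank ℚ⟮x⟯ L = 1 := by omega
  rw [h1', pow_one, hcx] at e1
  have e2 := abs_norm_eq (F := ℚ) (x ^ n)
  rw [map_pow, abs_pow, e1, hcxn] at e2
  have htow2 := Module.finrank_mul_finrank ℚ ℚ⟮x ^ n⟯ L
  rw [h5] at htow2
  have hfrxn := IntermediateField.adjoin.finrank (IsIntegral.of_finite ℚ (x ^ n))
  have hnm : n = finrank ℚ⟮x ^ n⟯ L := by
    have : (2:ℕ) ^ n = 2 ^ finrank ℚ⟮x ^ n⟯ L := by exact_mod_cast e2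
    exact Nat.pow_right_injective (le_refl 2) this
  have hdvd : finrank ℚ⟮x ^ n⟯ L ∣ 5 := Dvd.intro_left _ htow2
  rcases (Nat.Prime.eq_one_or_self_of_dvd (by norm_num) _ hdvd) with h | h
  · omega
  · constructor
    · omega
    · rw [h] at htow2; rw [← hfrxn]; omega

/-- Let `s` be the root in `(1, √2]` of `x^5 - 2x^4 + 2x^3 - 2x^2 + 2x - 2`. Then for every
integer `n ≥ 2`, `s^n` is not a Garsia number. -/
theorem power_of_special_garsia_not_garsia (s : ℝ)
    (h1 : 1 < s) (h2 : s ≤ Real.sqrt 2)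
    (hroot : aeval s ((X : ℤ[X])^5 - 2*X^4 + 2*X^3 - 2*X^2 + 2*X - 2) = 0) :
    ∀ n : ℕ, 2 ≤ n → ¬ IsGarsia (s ^ n) := by
  intro n hn hG
  obtain ⟨hg1, hg2, hint, hroots, hprod⟩ := hG
  have hrootT : aeval s Tpoly = 0 := hroot
  -- Step 1 : |coeff 0 of minpoly ℤ (s^n)| = 2
  have hPmonic : ((minpoly ℤ (s^n)).map (Int.castRingHom ℂ)).Monic :=
    (minpoly.monic hint).map _
  have hPeq := (IsAlgClosed.splits _).eq_prod_roots_of_monic hPmonic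
  have habsC : ‖(((minpoly ℤ (s^n)).map (Int.castRingHom ℂ)).eval 0)‖ = 2 := by
    conv_lhs => rw [hPeq]
    rw [eval_multiset_prod, Multiset.map_map, (map_multiset_prod (normHom : ℂ →*₀ ℝ) _ : ‖_‖ = _), Multiset.map_map, ← hprod]
    congr 1
    apply Multiset.map_congr rfl
    intro z hz
    simp [max_eq_left (hroots z hz).le]
  have habs : |(minpoly ℤ (s^n)).coeff 0| = 2 := by
    have hcoe : (((minpoly ℤ (s^n)).coeff 0 : ℤ) : ℂ)
        = ((minpoly ℤ (s^n)).map (Int.castRingHom ℂ)).eval 0 := by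
      rw [← coeff_zero_eq_eval_zero, coeff_map]; rfl
    rw [← hcoe, Complex.norm_intCast] at habsC
    exact_mod_cast habsC
  -- Step 2 : minpoly ℚ s
  have hTQirr : Irreducible (Tpoly.map (algebraMap ℤ ℚ)) :=
    (Polynomial.IsPrimitive.Int.irreducible_iff_irreducible_map_cast Tpoly_monic.isPrimitive).mp Tpoly_irred
  have haev : aeval s (Tpoly.map (algebraMap ℤ ℚ)) = 0 := by
    rw [aeval_map_algebraMap]; exact hrootT
  have hminQ : minpoly ℚ s = Tpoly.map (algebraMap ℤ ℚ) :=
    (minpoly.eq_of_irreducible_of_monic hTQirr haev (Tpoly_monic.map _)).symm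
  have hdeg5 : (minpoly ℚ s).natDegree = 5 := by
    rw [hminQ, Tpoly_monic.natDegree_map, Tpoly_natDegree]
  -- Step 3 : the field ℚ⟮s⟯
  have hQs : IsIntegral ℚ s := ⟨Tpoly.map (algebraMap ℤ ℚ), Tpoly_monic.map _, haev⟩
  haveI : FiniteDimensional ℚ ℚ⟮s⟯ := IntermediateField.adjoin.finiteDimensional hQs
  have hfr : finrank ℚ ℚ⟮s⟯ = 5 := by rw [IntermediateField.adjoin.finrank hQs, hdeg5]
  set t : ℚ⟮s⟯ := AdjoinSimple.gen ℚ s with ht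
  have htval : algebraMap ℚ⟮s⟯ ℝ t = s := AdjoinSimple.algebraMap_gen ℚ s
  have hmt : minpoly ℚ t = minpoly ℚ s := by
    rw [← minpoly.algebraMap_eq (algebraMap ℚ⟮s⟯ ℝ).injective t, htval]
  have hmtn : minpoly ℚ (t ^ n) = minpoly ℚ (s ^ n) := by
    rw [← minpoly.algebraMap_eq (algebraMap ℚ⟮s⟯ ℝ).injective (t ^ n), map_pow, htval]
  have hmZQ : minpoly ℚ (s ^ n) = (minpoly ℤ (s ^ n)).map (algebraMap ℤ ℚ) :=
    minpoly.isIntegrallyClosed_eq_field_fractions ℚ ℝ hint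
  have hcQ : |(minpoly ℚ (s ^ n)).coeff 0| = 2 := by
    rw [hmZQ, coeff_map]
    have : ((|(minpoly ℤ (s ^ n)).coeff 0| : ℤ) : ℚ) = 2 := by rw [habs]; norm_num
    rwa [Int.cast_abs] at this
  obtain ⟨hn5, hdegQ1⟩ := main_aux t n hfr (by rw [hmt, hdeg5])
    (by rw [hmt, hminQ, coeff_map, Tpoly_coeff0]; norm_num)
    (by rw [hmtn]; exact hcQ) hn
  rw [hmtn] at hdegQ1
  -- so minpoly ℤ (s^n) is linear and s^n = 2, n = 5
  have hdZ1 : (minpoly ℤ (s ^ n)).natDegree = 1 := by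
    have := hdegQ1
    rwa [hmZQ, (minpoly.monic hint).natDegree_map] at this
  have hplin := (minpoly ℤ (s ^ n)).eq_X_add_C_of_natDegree_le_one (le_of_eq hdZ1)
  have hc1 : (minpoly ℤ (s ^ n)).coeff 1 = 1 := by
    have := (minpoly.monic hint).leadingCoeff
    rwa [leadingCoeff, hdZ1] at this
  have haevp := minpoly.aeval ℤ (s ^ n)
  rw [hplin, hc1] at haevp
  simp only [map_add, map_mul, aeval_C, aeval_X, map_one, one_mul] at haevp
  have hsn2 : s ^ n = 2 := by
    rw [algebraMap_int_eq] at haevp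
    rcases (abs_eq (by norm_num : (0:ℤ) ≤ 2)).mp habs with h | h
    · rw [h] at haevp; simp at haevp; linarith
    · rw [h] at haevp; simp at haevp; linarith
  have hn5 : n = 5 := by omega
  rw [hn5] at hsn2
  have hre : s^5 - 2*s^4 + 2*s^3 - 2*s^2 + 2*s - 2 = 0 := by
    have := hrootT
    simp only [Tpoly, map_sub, map_add, map_mul, map_pow, aeval_X, map_ofNat] at this
    push_cast at this
    linarith [this]
  nlinarith [hsn2, hre, mul_pos (mul_pos (lt_trans zero_lt_one h1) (sub_pos.mpr h1))
    (by positivity : (0:ℝ) < s^2+1)]
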